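/- arXiv:2511.14563 — 2 statements merged into one kernel-verified Lean document; each statement's English description precedes it below -/
import Mathlib

section
/- Let q > 1 be a real number, let α ∈ ℂ with |α| = 1, and let σ, σ0 be real numbers with σ ≥ σ0 > 1/2. Then | α^{−1}·q^{σ−1/2} / (1 − α^{−1}·q^{σ−1/2})² | ≤ (1/((σ0 − 1/2)·log q)) · Re( 1/(1 − α·q^{1/2−σ0}) ). -/
open scoped Classical

noncomputable section

lemma key_real (c r r0 ℓ : ℝ) (hc : c ^ 2 ≤ 1) (hr0 : 1 < r0) (hr : r0 ≤ r)
    (hℓ : 0 < ℓ) (hℓ2 : ℓ ≤ r0 - 1) :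
    r / (1 - 2 * c * r + r ^ 2) ≤
      1 / ℓ * ((1 - c * r0⁻¹) / (1 - 2 * c * r0⁻¹ + (r0⁻¹) ^ 2)) := by
  have hc1 : c ≤ 1 := by nlinarith
  have hc2 : -1 ≤ c := by nlinarith
  have hr1 : 1 < r := lt_of_lt_of_le hr0 hr
  have hr00 : (0:ℝ) < r0 := by linarith
  have hDr : 0 < 1 - 2 * c * r + r ^ 2 := by nlinarith
  have hDs0 : 0 < r0 ^ 2 - 2 * c * r0 + 1 := by nlinarith
  have hrw : (1 - c * r0⁻¹) / (1 - 2 * c * r0⁻¹ + (r0⁻¹) ^ 2)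
      = (r0 * (r0 - c)) / (r0 ^ 2 - 2 * c * r0 + 1) := by
    have h : 1 - 2 * c * r0⁻¹ + (r0⁻¹) ^ 2 = (r0 ^ 2 - 2 * c * r0 + 1) / r0 ^ 2 := by
      field_simp
    rw [div_eq_div_iff (by rw [h]; positivity) hDs0.ne']
    field_simp
  rw [hrw, div_mul_div_comm, one_mul, div_le_div_iff₀ hDr (mul_pos hℓ hDs0)]
  have step1 : r * (r0 ^ 2 - 2 * c * r0 + 1) ≤ r0 * (r ^ 2 - 2 * c * r + 1) := by
    nlinarith [mul_nonneg (sub_nonneg.mpr hr) (show (0:ℝ) ≤ r * r0 - 1 by nlinarith)]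
  have step2 : ℓ ≤ r0 - c := by linarith
  nlinarith [mul_le_mul_of_nonneg_left step1 hℓ.le,
    mul_le_mul_of_nonneg_right step2 (mul_pos hr00 hDr).le]


/-- Altuğ–Tsimerman type lemma, generalized to real `q > 1`:
`|α⁻¹ q^{σ-1/2} / (1 - α⁻¹ q^{σ-1/2})²| ≤ (1/((σ0-1/2) log q)) · Re(1/(1 - α q^{1/2-σ0}))`
for `|α| = 1` and `σ ≥ σ0 > 1/2`. -/
theorem statement10 (q : ℝ) (hq : 1 < q) (α : ℂ) (hα : ‖α‖ = 1)
    (σ σ0 : ℝ) (hσ : σ0 ≤ σ) (hσ0 : 1 / 2 < σ0) :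
    ‖α⁻¹ * ((q ^ (σ - 1 / 2) : ℝ) : ℂ)
        / (1 - α⁻¹ * ((q ^ (σ - 1 / 2) : ℝ) : ℂ)) ^ 2‖
      ≤ 1 / ((σ0 - 1 / 2) * Real.log q)
          * (1 / (1 - α * ((q ^ (1 / 2 - σ0) : ℝ) : ℂ))).re := by
  have hq0 : (0:ℝ) < q := by linarith
  set r : ℝ := q ^ (σ - 1/2) with hrdef
  set s : ℝ := q ^ (1/2 - σ0) with hsdef
  set r0 : ℝ := q ^ (σ0 - 1/2) with hr0def
  have hr01 : 1 < r0 := Real.one_lt_rpow_iff_of_pos hq0 |>.mpr (Or.inl ⟨hq, by linarith⟩)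
  have hrr0 : r0 ≤ r := Real.rpow_le_rpow_of_exponent_le hq.le (by linarith)
  have hr1 : 1 < r := lt_of_lt_of_le hr01 hrr0
  have hs : s = r0⁻¹ := by
    rw [hsdef, hr0def, ← Real.rpow_neg hq0.le]
    norm_num
  have hnormα : Complex.normSq α = 1 := by
    rw [← Complex.sq_norm, hα]; norm_num
  have hc : α.re ^ 2 + α.im ^ 2 = 1 := by
    have := hnormα; rw [Complex.normSq_apply] at this; nlinarith [this]
  have hinv : α⁻¹ = (starRingEnd ℂ) α := by
    rw [Complex.inv_def, hnormα]; simp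
  -- compute the LHS abs
  have habs1 : ‖1 - α⁻¹ * (r:ℂ)‖ ^ 2 = 1 - 2 * α.re * r + r ^ 2 := by
    rw [Complex.sq_norm, Complex.normSq_apply, hinv]
    simp [Complex.sub_re, Complex.sub_im, Complex.mul_re, Complex.mul_im]
    nlinarith [hc]
  have hLHS : ‖α⁻¹ * ((r:ℝ) : ℂ) / (1 - α⁻¹ * ((r:ℝ) : ℂ)) ^ 2‖
      = r / (1 - 2 * α.re * r + r ^ 2) := by
    rw [norm_div, norm_mul, norm_pow, norm_inv, hα, habs1]
    simp [Complex.norm_real, abs_of_pos (by linarith : (0:ℝ) < r)]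
  -- compute the RHS real part
  have hRHS : (1 / (1 - α * ((s:ℝ) : ℂ))).re
      = (1 - α.re * s) / (1 - 2 * α.re * s + s ^ 2) := by
    rw [one_div, Complex.inv_re, Complex.normSq_apply]
    simp [Complex.sub_re, Complex.sub_im, Complex.mul_re, Complex.mul_im]
    rw [show (1 - α.re * s) * (1 - α.re * s) + α.im * s * (α.im * s)
        = 1 - 2 * α.re * s + s ^ 2 * (α.re ^ 2 + α.im ^ 2) by ring, hc]
    ring_nf
  rw [hLHS, hRHS, hs]
  have hlog : (σ0 - 1/2) * Real.log q = Real.log r0 := (Real.log_rpow hq0 _).symm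
  have hℓ : 0 < (σ0 - 1/2) * Real.log q :=
    mul_pos (by linarith) (Real.log_pos hq)
  have hℓ2 : (σ0 - 1/2) * Real.log q ≤ r0 - 1 := by
    rw [hlog]; exact Real.log_le_sub_one_of_pos (by linarith)
  have hc2 : α.re ^ 2 ≤ 1 := by nlinarith [sq_nonneg α.im]
  have := key_real α.re r r0 ((σ0 - 1/2) * Real.log q) hc2 hr01 hrr0 hℓ hℓ2
  convert this using 3

end
end

section
/- There is a constant C = C(q) such that for every real K ≥ 2 and every real σ0 > 1/2 with K·(σ0 − 1/2) < 1/(2 log q): | Σ_{P monic irreducible in 𝔽_q[t], deg P ≤ K} |P|^{−2σ0} − log K | ≤ C. -/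
open Polynomial Filter MeasureTheory
open scoped Classical BigOperators Topology

noncomputable section

namespace FF

variable (F : Type) [Field F] [Fintype F]

/-- The quadratic residue symbol `(f/P)` for `P` a monic irreducible polynomial:
`0` if `P ∣ f`, `1` if `f` is a nonzero square mod `P`, `-1` otherwise. -/
def resSymbol (f P : F[X]) : ℤ :=
  if P ∣ f then 0 else if ∃ g : F[X], P ∣ (g ^ 2 - f) then 1 else -1

/-- `χ_D(f) = (D/f)`, the residue symbol extended multiplicatively in the monic
irreducible factors (with multiplicity) of the lower entry `f`. -/
def chi (D f : F[X]) : ℤ :=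
  ((UniqueFactorizationMonoid.normalizedFactors f).map (fun P => resSymbol F D P)).prod

/-- The hyperelliptic ensemble `𝓗_n`: monic squarefree polynomials of degree `n`. -/
def Hset (n : ℕ) : Set F[X] := {D | D.Monic ∧ Squarefree D ∧ D.natDegree = n}

/-- The coefficient of `u^m` in `𝓛(u, χ_D) = Σ_{f monic} χ_D(f) u^{deg f}`. -/
def coeffL (D : F[X]) (m : ℕ) : ℤ :=
  ∑ᶠ f ∈ {f : F[X] | f.Monic ∧ f.natDegree = m}, chi F D f

/-- `𝓛(u, χ_D)`, a polynomial in `u` of degree `deg D - 1`, evaluated at `u : ℂ`. -/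
def calL (D : F[X]) (u : ℂ) : ℂ :=
  ∑ m ∈ Finset.range D.natDegree, (coeffL F D m : ℂ) * u ^ m

/-- `L(s, χ_D) = 𝓛(q^{-s}, χ_D)`. -/
def Lfun (D : F[X]) (s : ℂ) : ℂ := calL F D ((Fintype.card F : ℂ) ^ (-s))

/-- `arg L(σ0 + it, χ_D) = -∫_{σ0}^∞ Im (L'/L)(σ + it) dσ`, the continuous branch of
`Im log L` along the horizontal ray coming from `+∞`. -/
def argL (D : F[X]) (σ0 t : ℝ) : ℝ :=
  -∫ σ in Set.Ioi σ0,
    (deriv (Lfun F D) ((σ : ℂ) + (t : ℂ) * Complex.I) /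
      Lfun F D ((σ : ℂ) + (t : ℂ) * Complex.I)).im

/-- The genus `g = (n - 1 - η)/2`, where `η = 1` for even `n` and `η = 0` for odd `n`. -/
def genus (n : ℕ) : ℕ := (n - 1 - if Even n then 1 else 0) / 2

/-- Distance from `t` to the lattice `cℤ`. -/
def latDist (c t : ℝ) : ℝ := ⨅ m : ℤ, |t - (m : ℝ) * c|

/-- A shift `t = t(n)` is microscopic if `g·dist(t, (4π/log q)ℤ)` stays bounded. -/
def Microscopic (t : ℕ → ℝ) : Prop :=
  ∃ C : ℝ, ∀ n : ℕ,
    (genus n : ℝ) * latDist (4 * Real.pi / Real.log (Fintype.card F)) (t n) ≤ C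

/-- A shift `t = t(n)` is mesoscopic if `|t| → 0` but `g·dist(t, (4π/log q)ℤ) → ∞`. -/
def Mesoscopic (t : ℕ → ℝ) : Prop :=
  Tendsto (fun n => |t n|) atTop (𝓝 0) ∧
    Tendsto (fun n : ℕ =>
      (genus n : ℝ) * latDist (4 * Real.pi / Real.log (Fintype.card F)) (t n)) atTop atTop

/-- A shift is macroscopic if it is constant with absolute value in `(0, 2π)`. -/
def Macroscopic (t : ℕ → ℝ) : Prop :=
  ∃ c : ℝ, (∀ n, t n = c) ∧ 0 < |c| ∧ |c| < 2 * Real.pi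

/-- `min { x , 1/|t| }` with the convention `min{x, 1/0} = x`. -/
def mmin (x t : ℝ) : ℝ := if t = 0 then x else min x (1 / |t|)

/-- The mean `𝓜(a⃗, t⃗, x) = Σ_j (a_j/2)·log min{x, 1/(2|t_j|)}`. -/
def meanM {k : ℕ} (a t : Fin k → ℝ) (x : ℝ) : ℝ :=
  ∑ j, a j / 2 * Real.log (mmin x (2 * t j))

/-- The variance `𝓥_Re(a⃗, t⃗, x)`. -/
def varRe {k : ℕ} (a t : Fin k → ℝ) (x : ℝ) : ℝ :=
  1 / 2 * (∑ j, a j ^ 2) * Real.log x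
    + 1 / 2 * ∑ j, a j ^ 2 * Real.log (mmin x (2 * t j))
    + ∑ j1, ∑ j2, (if j1 < j2 then
        a j1 * a j2 * Real.log (mmin x (t j1 - t j2) * mmin x (t j1 + t j2)) else 0)

/-- The variance `𝓥_Im(a⃗, t⃗, x)`. -/
def varIm {k : ℕ} (a t : Fin k → ℝ) (x : ℝ) : ℝ :=
  1 / 2 * (∑ j, a j ^ 2) * Real.log x
    - 1 / 2 * ∑ j, a j ^ 2 * Real.log (mmin x (2 * t j))
    + ∑ j1, ∑ j2, (if j1 < j2 then
        a j1 * a j2 * Real.log (mmin x (t j1 - t j2) / mmin x (t j1 + t j2)) else 0)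

/-- `Φ(b) = (1/√(2π)) ∫_b^∞ e^{-u²/2} du`. -/
def Phi (b : ℝ) : ℝ :=
  (Real.sqrt (2 * Real.pi))⁻¹ * ∫ u in Set.Ioi b, Real.exp (-u ^ 2 / 2)

lemma finite_monic_le (n : ℕ) : {P : F[X] | P.Monic ∧ P.natDegree ≤ n}.Finite := by
  haveI : Finite (Polynomial.degreeLT F (n+1)) :=
    Finite.of_equiv _ (Polynomial.degreeLTEquiv F (n+1)).symm.toEquiv
  refine Set.Finite.subset (Set.toFinite (↑(Polynomial.degreeLT F (n+1)) : Set F[X])) ?_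
  rintro P ⟨hm, hd⟩
  simp only [SetLike.mem_coe, Polynomial.mem_degreeLT]
  calc P.degree ≤ P.natDegree := Polynomial.degree_le_natDegree
  _ < ((n+1 : ℕ) : WithBot ℕ) := by exact_mod_cast Nat.lt_succ_of_le hd

lemma finite_MI (d : ℕ) : {P : F[X] | P.Monic ∧ Irreducible P ∧ P.natDegree = d}.Finite :=
  (finite_monic_le F d).subset (fun P hP => ⟨hP.1, le_of_eq hP.2.2⟩)

/-- The finset of monic irreducible polynomials of degree `d`. -/
def Mi (d : ℕ) : Finset F[X] := (finite_MI F d).toFinset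


/-- A field extension of `F` of degree `n`. -/
def Efield (n : ℕ) : Type := SplittingField (X ^ (Fintype.card F)^n - X : F[X])

instance (n : ℕ) : Field (Efield F n) := inferInstanceAs (Field (SplittingField _))
instance (n : ℕ) : Algebra F (Efield F n) := inferInstanceAs (Algebra F (SplittingField _))
instance (n : ℕ) : IsSplittingField F (Efield F n) (X ^ (Fintype.card F)^n - X) :=
  Polynomial.IsSplittingField.splittingField _
instance (n : ℕ) : FiniteDimensional F (Efield F n) :=
  IsSplittingField.finiteDimensional _ (X ^ (Fintype.card F)^n - X)
instance (n : ℕ) : Finite (Efield F n) := Module.finite_of_finite F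

lemma pow_card_pow_Efield (n : ℕ) (hn : n ≠ 0) (x : Efield F n) :
    x ^ (Fintype.card F) ^ n = x := by
  classical
  set q := Fintype.card F with hq
  have hq1 : 1 < q := Fintype.one_lt_card
  set p := ringChar F with hp
  haveI : CharP F p := ringChar.charP F
  haveI hpf : Fact p.Prime := ⟨CharP.char_is_prime F p⟩
  obtain ⟨m, -, hcard⟩ := FiniteField.card F p
  haveI : CharP (Efield F n) p := (Algebra.charP_iff F (Efield F n) p).mp (by infer_instance)
  haveI : ExpChar (Efield F n) p := ExpChar.prime hpf.out
  have hqpow : p ^ ((m : ℕ) * n) = q ^ n := by rw [pow_mul, ← hcard]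
  let φ : Efield F n →ₐ[F] Efield F n :=
    { toRingHom := iterateFrobenius (Efield F n) p ((m : ℕ) * n)
      commutes' := fun r => by
        show iterateFrobenius (Efield F n) p ((m : ℕ) * n) (algebraMap F (Efield F n) r) = _
        rw [iterateFrobenius_def, hqpow, ← map_pow, FiniteField.pow_card_pow] }
  have hφ : ∀ y : Efield F n, φ y = y ^ q ^ n := fun y => by
    show iterateFrobenius (Efield F n) p ((m : ℕ) * n) y = _
    rw [iterateFrobenius_def, hqpow]
  have hgne : (X ^ q ^ n - X : F[X]) ≠ 0 :=
    FiniteField.X_pow_card_pow_sub_X_ne_zero F hn hq1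
  have hsub : (X ^ q ^ n - X : F[X]).rootSet (Efield F n) ⊆
      (AlgHom.equalizer φ (AlgHom.id F (Efield F n)) : Set (Efield F n)) := by
    intro y hy
    rw [mem_rootSet_of_ne hgne] at hy
    simp only [map_sub, map_pow, aeval_X, sub_eq_zero] at hy
    show φ y = y
    rw [hφ, hy]
  have htop : (⊤ : Subalgebra F (Efield F n)) ≤
      AlgHom.equalizer φ (AlgHom.id F (Efield F n)) := by
    rw [← IsSplittingField.adjoin_rootSet (Efield F n) (X ^ q ^ n - X : F[X])]
    exact Algebra.adjoin_le hsub
  have := htop (Algebra.mem_top (x := x))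
  have hx : φ x = x := this
  rw [hφ] at hx
  exact hx

lemma card_Efield (n : ℕ) (hn : n ≠ 0) :
    Nat.card (Efield F n) = (Fintype.card F) ^ n := by
  classical
  haveI : Fintype (Efield F n) := Fintype.ofFinite _
  set q := Fintype.card F with hq
  have hq1 : 1 < q := Fintype.one_lt_card
  set p := ringChar F with hp
  haveI : CharP F p := ringChar.charP F
  haveI hpf : Fact p.Prime := ⟨CharP.char_is_prime F p⟩
  obtain ⟨m, -, hcard⟩ := FiniteField.card F p
  have hsep : (X ^ q ^ n - X : F[X]).Separable := by
    have hdvd : p ∣ q ^ n := by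
      rw [hq, hcard, ← pow_mul]
      exact dvd_pow_self p (by positivity)
    exact galois_poly_separable p (q ^ n) hdvd
  have hgne : (X ^ q ^ n - X : F[X]) ≠ 0 :=
    FiniteField.X_pow_card_pow_sub_X_ne_zero F hn hq1
  have key : Fintype.card ((X ^ q ^ n - X : F[X]).rootSet (Efield F n)) =
      (X ^ q ^ n - X : F[X]).natDegree :=
    card_rootSet_eq_natDegree hsep (SplittingField.splits _)
  have huniv : (X ^ q ^ n - X : F[X]).rootSet (Efield F n) = Set.univ := by
    rw [Set.eq_univ_iff_forall]
    intro x
    rw [mem_rootSet_of_ne hgne]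
    simp only [map_sub, map_pow, aeval_X, sub_eq_zero]
    exact pow_card_pow_Efield F n hn x
  rw [FiniteField.X_pow_card_pow_sub_X_natDegree_eq F hn hq1] at key
  have key' : Nat.card ((X ^ q ^ n - X : F[X]).rootSet (Efield F n)) = q ^ n := by
    rw [Nat.card_eq_fintype_card]; exact key
  rw [huniv] at key'
  rw [← key']
  exact (Nat.card_congr (Equiv.Set.univ _)).symm

lemma finrank_Efield (n : ℕ) (hn : n ≠ 0) :
    Module.finrank F (Efield F n) = n := by
  haveI : Fintype (Efield F n) := Fintype.ofFinite _
  have h1 : Fintype.card (Efield F n) = (Fintype.card F) ^ Module.finrank F (Efield F n) :=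
    Module.card_eq_pow_finrank
  have h2 := card_Efield F n hn
  rw [Nat.card_eq_fintype_card, h1] at h2
  exact Nat.pow_right_injective Fintype.one_lt_card h2


lemma sep_g (n : ℕ) (hn : n ≠ 0) :
    (X ^ (Fintype.card F) ^ n - X : F[X]).Separable := by
  set p := ringChar F with hp
  haveI : CharP F p := ringChar.charP F
  haveI hpf : Fact p.Prime := ⟨CharP.char_is_prime F p⟩
  obtain ⟨m, -, hcard⟩ := FiniteField.card F p
  have hdvd : p ∣ (Fintype.card F) ^ n := by
    rw [hcard, ← pow_mul]
    exact dvd_pow_self p (by positivity)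
  exact galois_poly_separable p _ hdvd

lemma dvd_g {n : ℕ} (hn : n ≠ 0) {P : F[X]} (hm : P.Monic) (hirr : Irreducible P)
    (hdvd : P.natDegree ∣ n) : P ∣ (X ^ (Fintype.card F) ^ n - X : F[X]) := by
  classical
  set q := Fintype.card F with hq
  have hPne : P ≠ 0 := hm.ne_zero
  haveI : Fact (Irreducible P) := ⟨hirr⟩
  let K := AdjoinRoot P
  haveI : Module.Finite F K := PowerBasis.finite (AdjoinRoot.powerBasis hPne)
  haveI : Finite K := Module.finite_of_finite F
  haveI : Fintype K := Fintype.ofFinite _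
  have hcardK : Fintype.card K = q ^ P.natDegree := by
    rw [Module.card_eq_pow_finrank (K := F) (V := K), PowerBasis.finrank (AdjoinRoot.powerBasis hPne),
      AdjoinRoot.powerBasis_dim]
  obtain ⟨k, hk⟩ := hdvd
  have hroot : (AdjoinRoot.root P) ^ q ^ n = AdjoinRoot.root P := by
    have := FiniteField.pow_card_pow k (AdjoinRoot.root P)
    rwa [hcardK, ← pow_mul, ← hk] at this
  have hmin : minpoly F (AdjoinRoot.root P) = P := by
    rw [AdjoinRoot.minpoly_root hPne, hm.leadingCoeff, inv_one, map_one, mul_one]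
  rw [← hmin]
  apply minpoly.dvd
  simp only [map_sub, map_pow, aeval_X, sub_eq_zero]
  exact hroot

lemma fiber_card {n : ℕ} (hn : n ≠ 0) {P : F[X]} (hm : P.Monic) (hirr : Irreducible P)
    (hdvd : P.natDegree ∣ n) [Fintype (Efield F n)] :
    (Finset.univ.filter (fun x : Efield F n => minpoly F x = P)).card = P.natDegree := by
  classical
  set q := Fintype.card F with hq
  have hq1 : 1 < q := Fintype.one_lt_card
  have hgne : (X ^ q ^ n - X : F[X]) ≠ 0 :=
    FiniteField.X_pow_card_pow_sub_X_ne_zero F hn hq1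
  have hPdvd := dvd_g F hn hm hirr hdvd
  have hPsep : P.Separable := (sep_g F n hn).of_dvd hPdvd
  have hsplits : Splits (P.map (algebraMap F (Efield F n))) :=
    (SplittingField.splits _).of_dvd (Polynomial.map_ne_zero hgne) (Polynomial.map_dvd _ hPdvd)
  have hfib : Finset.univ.filter (fun x : Efield F n => minpoly F x = P)
      = (P.map (algebraMap F (Efield F n))).roots.toFinset := by
    ext x
    simp only [Finset.mem_filter, Finset.mem_univ, true_and, Multiset.mem_toFinset,
      mem_roots (show P.map (algebraMap F (Efield F n)) ≠ 0 from
        (Polynomial.map_ne_zero_iff (algebraMap F (Efield F n)).injective).mpr hm.ne_zero),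
      IsRoot, eval_map, ← aeval_def]
    constructor
    · rintro rfl; exact minpoly.aeval F x
    · intro hx; exact (minpoly.eq_of_irreducible_of_monic hirr hx hm).symm
  rw [hfib, Multiset.toFinset_card_of_nodup (nodup_roots (hPsep.map)),
    ← hsplits.natDegree_eq_card_roots, natDegree_map]

lemma key_identity (n : ℕ) (hn : n ≠ 0) :
    (Fintype.card F) ^ n = ∑ d ∈ n.divisors, d * (Mi F d).card := by
  classical
  haveI : Fintype (Efield F n) := Fintype.ofFinite _
  have hTfin : {P : F[X] | P.Monic ∧ Irreducible P ∧ P.natDegree ∣ n}.Finite :=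
    (finite_monic_le F n).subset (fun P hP =>
      ⟨hP.1, Nat.le_of_dvd (Nat.pos_of_ne_zero hn) hP.2.2⟩)
  set T : Finset F[X] := hTfin.toFinset with hT
  have hmemT : ∀ P, P ∈ T ↔ P.Monic ∧ Irreducible P ∧ P.natDegree ∣ n := fun P =>
    hTfin.mem_toFinset
  have hmaps : ∀ x : Efield F n, x ∈ (Finset.univ : Finset (Efield F n)) → minpoly F x ∈ T := by
    intro x _
    have hint : IsIntegral F x := IsIntegral.of_finite F x
    rw [hmemT]
    refine ⟨minpoly.monic hint, minpoly.irreducible hint, ?_⟩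
    have hD := minpoly.degree_dvd hint
    rwa [finrank_Efield F n hn] at hD
  have h1 : Fintype.card (Efield F n)
      = ∑ P ∈ T, (Finset.univ.filter (fun x : Efield F n => minpoly F x = P)).card :=
    Finset.card_eq_sum_card_fiberwise hmaps
  have h2 : ∑ P ∈ T, (Finset.univ.filter (fun x : Efield F n => minpoly F x = P)).card
      = ∑ P ∈ T, P.natDegree := by
    refine Finset.sum_congr rfl (fun P hP => ?_)
    rw [hmemT] at hP
    exact fiber_card F hn hP.1 hP.2.1 hP.2.2
  have h3 : ∑ P ∈ T, P.natDegree
      = ∑ d ∈ n.divisors, ∑ P ∈ T.filter (fun P => P.natDegree = d), P.natDegree := by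
    refine (Finset.sum_fiberwise_of_maps_to ?_ _).symm
    intro P hP
    rw [hmemT] at hP
    exact Nat.mem_divisors.mpr ⟨hP.2.2, hn⟩
  have h4 : ∀ d ∈ n.divisors,
      ∑ P ∈ T.filter (fun P => P.natDegree = d), P.natDegree = d * (Mi F d).card := by
    intro d hd
    have hfd : T.filter (fun P => P.natDegree = d) = Mi F d := by
      ext P
      simp only [Finset.mem_filter, hmemT, Mi, Set.Finite.mem_toFinset, Set.mem_setOf_eq]
      constructor
      · rintro ⟨⟨h1, h2, _⟩, h4⟩; exact ⟨h1, h2, h4⟩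
      · rintro ⟨h1, h2, h3⟩; exact ⟨⟨h1, h2, h3 ▸ (Nat.mem_divisors.mp hd).1⟩, h3⟩
    rw [hfd]
    calc ∑ P ∈ Mi F d, P.natDegree
        = ∑ _P ∈ Mi F d, d :=
          Finset.sum_congr rfl (fun P hP => ((finite_MI F d).mem_toFinset.mp hP).2.2)
      _ = d * (Mi F d).card := by rw [Finset.sum_const, smul_eq_mul, mul_comm]
  have hcard : Fintype.card (Efield F n) = (Fintype.card F) ^ n := by
    rw [← Nat.card_eq_fintype_card, card_Efield F n hn]
  rw [← hcard, h1, h2, h3]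
  exact Finset.sum_congr rfl h4


lemma pi_upper (d : ℕ) (hd : d ≠ 0) : d * (Mi F d).card ≤ (Fintype.card F) ^ d := by
  rw [key_identity F d hd]
  exact Finset.single_le_sum (f := fun e => e * (Mi F e).card) (fun e _ => Nat.zero_le _)
    (Nat.mem_divisors_self d hd)

lemma geom_nat (q k : ℕ) (hq : 2 ≤ q) :
    ∑ e ∈ Finset.range (k+1), q ^ e ≤ 2 * q ^ k := by
  induction k with
  | zero => simp
  | succ k ih =>
    rw [Finset.sum_range_succ]
    have h2 : 2 * q ^ k ≤ q ^ (k+1) := by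
      rw [pow_succ, mul_comm]
      exact Nat.mul_le_mul le_rfl hq
    calc ∑ e ∈ Finset.range (k+1), q ^ e + q ^ (k+1) ≤ 2 * q ^ k + q ^ (k+1) :=
          Nat.add_le_add_right ih _
      _ ≤ q ^ (k+1) + q ^ (k+1) := Nat.add_le_add_right h2 _
      _ = 2 * q ^ (k+1) := by ring

lemma pi_lower (d : ℕ) (hd : d ≠ 0) :
    (Fintype.card F) ^ d ≤ d * (Mi F d).card + 2 * (Fintype.card F) ^ (d / 2) := by
  set q := Fintype.card F with hq
  have hq2 : 2 ≤ q := Fintype.one_lt_card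
  have h0 := key_identity F d hd
  rw [← Finset.sum_erase_add _ _ (Nat.mem_divisors_self d hd)] at h0
  have hrest : ∑ e ∈ (Nat.divisors d).erase d, e * (Mi F e).card ≤ 2 * q ^ (d / 2) := by
    have step1 : ∑ e ∈ (Nat.divisors d).erase d, e * (Mi F e).card
        ≤ ∑ e ∈ (Nat.divisors d).erase d, q ^ e := by
      refine Finset.sum_le_sum (fun e he => ?_)
      have he' := Nat.mem_divisors.mp (Finset.mem_of_mem_erase he)
      exact pi_upper F e (fun h => hd (Nat.eq_zero_of_zero_dvd (h ▸ he'.1)))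
    have step2 : ∑ e ∈ (Nat.divisors d).erase d, q ^ e
        ≤ ∑ e ∈ Finset.range (d / 2 + 1), q ^ e := by
      refine Finset.sum_le_sum_of_subset ?_
      intro e he
      rw [Finset.mem_range, Nat.lt_succ_iff]
      have hne := Finset.ne_of_mem_erase he
      have he' := (Nat.mem_divisors.mp (Finset.mem_of_mem_erase he)).1
      obtain ⟨k, hk⟩ := he'
      have hk2 : 2 ≤ k := by
        rcases Nat.lt_or_ge k 2 with h | h
        · interval_cases k
          · exact absurd (by simpa using hk) hd
          · exact absurd (by simpa using hk.symm) hne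
        · exact h
      rw [Nat.le_div_iff_mul_le (by norm_num)]
      calc e * 2 ≤ e * k := Nat.mul_le_mul_left _ hk2
        _ = d := hk.symm
    exact step1.trans (step2.trans (geom_nat q (d/2) hq2))
  rw [h0, add_comm]
  exact Nat.add_le_add_left hrest _


lemma Mi_zero : Mi F 0 = ∅ := by
  ext P
  simp only [Mi, Set.Finite.mem_toFinset, Set.mem_setOf_eq, Finset.notMem_empty, iff_false]
  rintro ⟨hm, hirr, hdeg⟩
  exact hirr.not_isUnit (hm.natDegree_eq_zero.mp hdeg ▸ isUnit_one)

set_option maxHeartbeats 1000000 in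
theorem statement12_aux :
    ∃ C : ℝ, ∀ (K σ0 : ℝ), 2 ≤ K → 1 / 2 < σ0 →
      K * (σ0 - 1 / 2) < 1 / (2 * Real.log (Fintype.card F)) →
      |(∑ᶠ P ∈ {P : F[X] | P.Monic ∧ Irreducible P ∧ (P.natDegree : ℝ) ≤ K},
          ((Fintype.card F : ℝ) ^ P.natDegree : ℝ) ^ (-(2 * σ0)))
        - Real.log K| ≤ C := by
  classical
  refine ⟨9, fun K σ0 hK hσ hKσ => ?_⟩
  set q := Fintype.card F with hq
  have hq2 : (2 : ℕ) ≤ q := Fintype.one_lt_card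
  have hq2R : (2 : ℝ) ≤ (q : ℝ) := by exact_mod_cast hq2
  have hqpos : (0 : ℝ) < (q : ℝ) := by linarith
  set L : ℝ := Real.log q with hL
  have hLpos : 0 < L := Real.log_pos (by exact_mod_cast hq2)
  set ε : ℝ := (2 * σ0 - 1) * L with hε
  have hεpos : 0 < ε := by
    apply mul_pos _ hLpos; linarith
  have hKε : K * ε < 1 := by
    have h2L : 0 < 2 * L := by linarith
    rw [lt_div_iff₀ h2L] at hKσ
    calc K * ε = K * (σ0 - 1/2) * (2 * L) := by ring
      _ < 1 := hKσ
  have hK0 : (0:ℝ) ≤ K := by linarith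
  set N : ℕ := ⌊K⌋₊ with hN
  have hN2 : 2 ≤ N := Nat.le_floor (by exact_mod_cast hK)
  have hNK : (N : ℝ) ≤ K := Nat.floor_le hK0
  have hKN1 : K ≤ (N : ℝ) + 1 := le_of_lt (Nat.lt_floor_add_one K)
  -- the weight function
  set w : ℕ → ℝ := fun d => ((q : ℝ) ^ d) ^ (-(2 * σ0)) with hw
  have hwpos : ∀ d, 0 < w d := fun d => Real.rpow_pos_of_pos (pow_pos hqpos d) _
  have hwexp : ∀ d : ℕ, w d = Real.exp ((d * L) * (-(2 * σ0))) := by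
    intro d
    show ((q:ℝ) ^ d) ^ (-(2 * σ0)) = _
    rw [Real.rpow_def_of_pos (pow_pos hqpos d), Real.log_pow]
  have hpowexp : ∀ d : ℕ, ((q : ℝ)) ^ d = Real.exp (d * L) := by
    intro d
    rw [← Real.exp_log (pow_pos hqpos d), Real.log_pow]
  have hA : ∀ d : ℕ, (q : ℝ) ^ d * w d = Real.exp (-(ε * d)) := by
    intro d
    rw [hpowexp, hwexp, ← Real.exp_add]
    congr 1
    rw [hε]; push_cast; ring
  -- ρ
  set ρ : ℝ := Real.exp (-(L/2)) with hρ
  have hρpos : 0 < ρ := Real.exp_pos _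
  have hρ34 : ρ ≤ 3/4 := by
    have hsq : ρ ^ 2 = Real.exp (-L) := by
      rw [hρ, ← Real.exp_nat_mul]
      congr 1
      push_cast
      ring
    have hsq2 : ρ ^ 2 ≤ 1/2 := by
      rw [hsq, Real.exp_neg, hL, Real.exp_log hqpos]
      rw [inv_le_comm₀ (by linarith) (by norm_num)]
      simpa using hq2R
    nlinarith [hρpos]
  have hρlt1 : ρ < 1 := by linarith
  -- B bound
  have hB : ∀ d : ℕ, (q : ℝ) ^ (d / 2) * w d ≤ ρ ^ d := by
    intro d
    rw [hpowexp, hwexp, ← Real.exp_add, hρ, ← Real.exp_nat_mul]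
    apply Real.exp_le_exp.mpr
    have hfloor : ((d / 2 : ℕ) : ℝ) ≤ (d : ℝ) / 2 := Nat.cast_div_le
    have hd0 : (0:ℝ) ≤ (d:ℝ) := Nat.cast_nonneg d
    nlinarith [mul_le_mul_of_nonneg_right hfloor hLpos.le]
  -- per-term bounds for d ≥ 1
  have hterm_up : ∀ d : ℕ, d ≠ 0 → ((Mi F d).card : ℝ) * w d ≤ 1 / d := by
    intro d hd
    have hdpos : (0:ℝ) < d := by exact_mod_cast Nat.pos_of_ne_zero hd
    rw [le_div_iff₀ hdpos]
    have h1 : ((d * (Mi F d).card : ℕ) : ℝ) ≤ ((q ^ d : ℕ) : ℝ) := by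
      exact_mod_cast pi_upper F d hd
    push_cast at h1
    calc ((Mi F d).card : ℝ) * w d * d = (d * (Mi F d).card) * w d := by ring
      _ ≤ (q:ℝ)^d * w d := mul_le_mul_of_nonneg_right h1 (hwpos d).le
      _ = Real.exp (-(ε * d)) := hA d
      _ ≤ 1 := Real.exp_le_one_iff.mpr (neg_nonpos.mpr (by positivity))
  have hterm_lo : ∀ d : ℕ, d ≠ 0 → 1 / d - ε - 2 * ρ ^ d ≤ ((Mi F d).card : ℝ) * w d := by
    intro d hd
    have hdpos : (0:ℝ) < d := by exact_mod_cast Nat.pos_of_ne_zero hd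
    have hd1 : (1:ℝ) ≤ d := by exact_mod_cast Nat.one_le_iff_ne_zero.mpr hd
    have h1 : ((q ^ d : ℕ) : ℝ) ≤ ((d * (Mi F d).card + 2 * q ^ (d / 2) : ℕ) : ℝ) := by
      exact_mod_cast pi_lower F d hd
    push_cast at h1
    have h2 : Real.exp (-(ε * d)) ≤ (d : ℝ) * (((Mi F d).card : ℝ) * w d) + 2 * ρ ^ d := by
      calc Real.exp (-(ε * d)) = (q:ℝ)^d * w d := (hA d).symm
        _ ≤ ((d : ℝ) * ((Mi F d).card : ℝ) + 2 * (q:ℝ) ^ (d/2)) * w d :=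
            mul_le_mul_of_nonneg_right h1 (hwpos d).le
        _ = (d : ℝ) * (((Mi F d).card : ℝ) * w d) + 2 * ((q:ℝ) ^ (d/2) * w d) := by ring
        _ ≤ (d : ℝ) * (((Mi F d).card : ℝ) * w d) + 2 * ρ ^ d := by
            have := hB d; nlinarith
    have h3 : 1 - ε * d ≤ Real.exp (-(ε * d)) := by
      have := Real.add_one_le_exp (-(ε * d)); linarith
    have hcard0 : (0:ℝ) ≤ ((Mi F d).card : ℝ) * w d := by positivity
    have hρd : (0:ℝ) ≤ ρ ^ d := by positivity
    rw [div_sub' hdpos.ne', div_sub' hdpos.ne', div_le_iff₀ hdpos]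
    nlinarith [mul_le_mul_of_nonneg_left h2 hdpos.le]
  -- convert the finsum into a finite sum
  have hSeq : {P : F[X] | P.Monic ∧ Irreducible P ∧ (P.natDegree : ℝ) ≤ K}
      = {P : F[X] | P.Monic ∧ Irreducible P ∧ P.natDegree ≤ N} := by
    ext P
    simp only [Set.mem_setOf_eq, and_congr_right_iff]
    intro _ _
    exact (Nat.le_floor_iff hK0).symm
  have hfin : {P : F[X] | P.Monic ∧ Irreducible P ∧ P.natDegree ≤ N}.Finite :=
    (finite_monic_le F N).subset (fun P hP => ⟨hP.1, hP.2.2⟩)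
  have hsum1 : (∑ᶠ P ∈ {P : F[X] | P.Monic ∧ Irreducible P ∧ (P.natDegree : ℝ) ≤ K},
          ((q : ℝ) ^ P.natDegree : ℝ) ^ (-(2 * σ0)))
      = ∑ P ∈ hfin.toFinset, w P.natDegree := by
    rw [hSeq]
    exact finsum_mem_eq_finite_toFinset_sum _ hfin
  have hsum2 : ∑ P ∈ hfin.toFinset, w P.natDegree
      = ∑ d ∈ Finset.range (N+1), ((Mi F d).card : ℝ) * w d := by
    rw [← Finset.sum_fiberwise_of_maps_to (g := fun P : F[X] => P.natDegree)
      (t := Finset.range (N+1)) (fun P hP => Finset.mem_range.mpr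
        (Nat.lt_succ_of_le (hfin.mem_toFinset.mp hP).2.2)) (fun P => w P.natDegree)]
    refine Finset.sum_congr rfl (fun d hd => ?_)
    have hfd : hfin.toFinset.filter (fun P => P.natDegree = d) = Mi F d := by
      ext P
      simp only [Finset.mem_filter, Set.Finite.mem_toFinset, Set.mem_setOf_eq, Mi]
      constructor
      · rintro ⟨⟨h1, h2, _⟩, h4⟩; exact ⟨h1, h2, h4⟩
      · rintro ⟨h1, h2, h3⟩
        exact ⟨⟨h1, h2, h3 ▸ Nat.lt_succ_iff.mp (Finset.mem_range.mp hd)⟩, h3⟩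
    rw [hfd]
    calc ∑ P ∈ Mi F d, w P.natDegree = ∑ _P ∈ Mi F d, w d :=
        Finset.sum_congr rfl (fun P hP => by
          rw [((finite_MI F d).mem_toFinset.mp hP).2.2])
      _ = ((Mi F d).card : ℝ) * w d := by rw [Finset.sum_const, nsmul_eq_mul]
  set S := ∑ d ∈ Finset.range (N+1), ((Mi F d).card : ℝ) * w d with hS
  have hsplit : S = ∑ i ∈ Finset.range N, ((Mi F (i+1)).card : ℝ) * w (i+1) := by
    rw [hS, Finset.sum_range_succ']
    simp [Mi_zero]
  have hharm : ((harmonic N : ℚ) : ℝ) = ∑ i ∈ Finset.range N, (1 : ℝ) / ((i:ℝ)+1) := by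
    rw [harmonic]
    push_cast
    refine Finset.sum_congr rfl (fun i _ => ?_)
    rw [one_div]
  have hNpos : (0:ℝ) < (N:ℝ) := by
    have : 0 < N := by omega
    exact_mod_cast this
  have hup : S ≤ 1 + Real.log K := by
    rw [hsplit]
    calc ∑ i ∈ Finset.range N, ((Mi F (i+1)).card : ℝ) * w (i+1)
        ≤ ∑ i ∈ Finset.range N, 1 / ((i:ℝ)+1) := by
          refine Finset.sum_le_sum (fun i _ => ?_)
          have h := hterm_up (i+1) (Nat.succ_ne_zero i)
          push_cast at h
          exact h
      _ = ((harmonic N : ℚ) : ℝ) := hharm.symm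
      _ ≤ 1 + Real.log N := harmonic_le_one_add_log N
      _ ≤ 1 + Real.log K := by
          have := Real.log_le_log hNpos hNK
          linarith
  have hgeom : ∑ i ∈ Finset.range N, ρ ^ (i+1) ≤ 4 := by
    have hnn : (0:ℝ) ≤ ∑ i ∈ Finset.range N, ρ ^ i :=
      Finset.sum_nonneg (fun i _ => by positivity)
    have h1 : ∑ i ∈ Finset.range N, ρ ^ (i+1) ≤ ∑ i ∈ Finset.range N, ρ ^ i :=
      Finset.sum_le_sum (fun i _ =>
        pow_le_pow_of_le_one hρpos.le hρlt1.le (Nat.le_succ i))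
    have h3 := geom_sum_mul ρ N
    have hρN : (0:ℝ) ≤ ρ ^ N := by positivity
    nlinarith [h1, h3, hρ34, hρN, hnn]
  have hlo : Real.log K - 9 ≤ S := by
    rw [hsplit]
    have hstep : ∑ i ∈ Finset.range N, (1/((i:ℝ)+1) - ε - 2 * ρ^(i+1))
        ≤ ∑ i ∈ Finset.range N, ((Mi F (i+1)).card : ℝ) * w (i+1) :=
      Finset.sum_le_sum (fun i _ => by
        have h := hterm_lo (i+1) (Nat.succ_ne_zero i)
        push_cast at h
        exact h)
    have hsum3 : ∑ i ∈ Finset.range N, (1/((i:ℝ)+1) - ε - 2 * ρ^(i+1))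
        = ((harmonic N : ℚ):ℝ) - (N:ℝ) * ε - 2 * ∑ i ∈ Finset.range N, ρ^(i+1) := by
      rw [hharm]
      rw [Finset.sum_sub_distrib, Finset.sum_sub_distrib, Finset.sum_const,
        Finset.card_range, Finset.mul_sum]
      push_cast
      ring
    have hharmlog : Real.log ((N:ℝ)+1) ≤ ((harmonic N : ℚ):ℝ) := by
      have := log_add_one_le_harmonic N
      push_cast at this
      exact this
    have hlogK : Real.log K ≤ Real.log ((N:ℝ)+1) := Real.log_le_log (by linarith) hKN1
    have hNε : (N:ℝ) * ε ≤ 1 :=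
      le_of_lt (lt_of_le_of_lt (mul_le_mul_of_nonneg_right hNK hεpos.le) hKε)
    have := hstep
    rw [hsum3] at this
    linarith [hgeom]
  rw [hsum1, hsum2, abs_le]
  constructor <;> [linarith [hlo]; linarith [hup, Real.log_nonneg (by linarith : (1:ℝ) ≤ K)]]


/-- `Σ_{deg P ≤ K} |P|^{-2σ0} = log K + O(1)` when `K(σ0 - 1/2) < 1/(2 log q)`. -/
theorem statement12 :
    ∃ C : ℝ, ∀ (K σ0 : ℝ), 2 ≤ K → 1 / 2 < σ0 →
      K * (σ0 - 1 / 2) < 1 / (2 * Real.log (Fintype.card F)) →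
      |(∑ᶠ P ∈ {P : F[X] | P.Monic ∧ Irreducible P ∧ (P.natDegree : ℝ) ≤ K},
          ((Fintype.card F : ℝ) ^ P.natDegree : ℝ) ^ (-(2 * σ0)))
        - Real.log K| ≤ C :=
  statement12_aux F

end FF

end
end
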